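/- Let (L^{•,•}, d, δ) be a double complex of vector spaces: d has bidegree (1,0), δ has bidegree (0,1), d² = 0, δ² = 0, and dδ + δd = 0. Suppose there exists a linear operator σ : L^{•,•} → L^{•,•−1} of bidegree (0,−1) such that dσ + σd = 0 and (δσ + σδ)∘d = d. Then Im(dδ) = ker δ ∩ Im d. -/
import Mathlib


/-- Abstract `∂∂̄`-lemma for a double complex: if there is an operator `σ` of bidegree
`(0,−1)` with `dσ + σd = 0` and `(δσ + σδ)d = d`, then `Im(dδ) = ker δ ∩ Im d`. -/
theorem del_delbar_lemma {K M : Type*} [Field K] [AddCommGroup M] [Module K M]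
    (𝒜 : ℤ → ℤ → Submodule K M)
    (hInternal : DirectSum.IsInternal (fun p : ℤ × ℤ => 𝒜 p.1 p.2))
    (d δ σ : M →ₗ[K] M)
    (hd_mem : ∀ (a b : ℤ), ∀ x ∈ 𝒜 a b, d x ∈ 𝒜 (a + 1) b)
    (hδ_mem : ∀ (a b : ℤ), ∀ x ∈ 𝒜 a b, δ x ∈ 𝒜 a (b + 1))
    (hσ_mem : ∀ (a b : ℤ), ∀ x ∈ 𝒜 a b, σ x ∈ 𝒜 a (b - 1))
    (hd2 : d ∘ₗ d = 0) (hδ2 : δ ∘ₗ δ = 0)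
    (hanti : d ∘ₗ δ + δ ∘ₗ d = 0)
    (hσd : d ∘ₗ σ + σ ∘ₗ d = 0)
    (hkey : (δ ∘ₗ σ + σ ∘ₗ δ) ∘ₗ d = d) :
    LinearMap.range (d ∘ₗ δ) = LinearMap.ker δ ⊓ LinearMap.range d := by
  ext x
  simp only [LinearMap.mem_range, Submodule.mem_inf, LinearMap.mem_ker, LinearMap.coe_comp,
    Function.comp_apply]
  constructor
  · rintro ⟨y, rfl⟩
    refine ⟨?_, δ y, rfl⟩
    have h1 : d (δ (δ y)) + δ (d (δ y)) = 0 := congrFun (congrArg DFunLike.coe hanti) (δ y)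
    have h2 : δ (δ y) = 0 := congrFun (congrArg DFunLike.coe hδ2) y
    simp only [h2, map_zero, zero_add] at h1
    exact h1
  · rintro ⟨hx, α, rfl⟩
    refine ⟨σ α, ?_⟩
    have hk : δ (σ (d α)) + σ (δ (d α)) = d α := congrFun (congrArg DFunLike.coe hkey) α
    have hs : d (σ α) + σ (d α) = 0 := congrFun (congrArg DFunLike.coe hσd) α
    have ha : d (δ (σ α)) + δ (d (σ α)) = 0 := congrFun (congrArg DFunLike.coe hanti) (σ α)
    rw [hx, map_zero, add_zero] at hk
    have h1 : σ (d α) = -(d (σ α)) := eq_neg_of_add_eq_zero_right hs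
    have h2 : d (δ (σ α)) = -(δ (d (σ α))) := eq_neg_of_add_eq_zero_left ha
    rw [h1, map_neg] at hk
    rw [h2, hk]
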